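/- Let n, L be natural numbers with L ≥ 1. For each t < L let W_t be an n×n real matrix, let a_t : Fin n → ℝ satisfy a_t i ∈ {0,1} for every i, let A_t = Matrix.diagonal a_t, let v_t : Fin n → ℝ and α_t ≥ 0 satisfy 0 ≤ v_t i ≤ α_t for every i. Suppose x, x' : ℕ → ℝⁿ satisfy the residual recursions x_{t+1} = x_t + v_t ⊙ (A_t.mulVec (W_t.mulVec x_t)) and x'_{t+1} = x'_t + v_t ⊙ (A_t.mulVec (W_t.mulVec x'_t)) for all t < L. Then ‖x'_L − x_L‖ ≤ ‖x'_0 − x_0‖ · ∏_{t=0}^{L−1} (1 + α_t · ‖W_t‖₂), where ‖·‖ is the Euclidean norm on ℝⁿ and ‖W_t‖₂ is the ℓ² operator norm. -/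
import Mathlib

noncomputable def euclNorm {n : ℕ} (y : Fin n → ℝ) : ℝ :=
  ‖(EuclideanSpace.equiv (Fin n) ℝ).symm y‖

noncomputable def l2OpNorm {m n : ℕ} (M : Matrix (Fin m) (Fin n) ℝ) : ℝ :=
  ‖LinearMap.toContinuousLinearMap (Matrix.toEuclideanLin M)‖

def had {n : ℕ} (u w : Fin n → ℝ) : Fin n → ℝ := fun i => u i * w i

lemma euclNorm_eq {n : ℕ} (y : Fin n → ℝ) :
    euclNorm y = Real.sqrt (∑ i, (y i) ^ 2) := by
  rw [euclNorm, EuclideanSpace.norm_eq]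
  simp [Real.norm_eq_abs, sq_abs]

lemma euclNorm_nonneg {n : ℕ} (y : Fin n → ℝ) : 0 ≤ euclNorm y :=
  norm_nonneg _

lemma euclNorm_mono {n : ℕ} {u w : Fin n → ℝ} (h : ∀ i, |u i| ≤ |w i|) :
    euclNorm u ≤ euclNorm w := by
  rw [euclNorm_eq, euclNorm_eq]
  apply Real.sqrt_le_sqrt
  apply Finset.sum_le_sum
  intro i _
  rw [← sq_abs (u i), ← sq_abs (w i)]
  exact pow_le_pow_left₀ (abs_nonneg _) (h i) 2

lemma euclNorm_add_le {n : ℕ} (u w : Fin n → ℝ) :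
    euclNorm (u + w) ≤ euclNorm u + euclNorm w := by
  unfold euclNorm
  rw [map_add]
  exact norm_add_le _ _

lemma euclNorm_mulVec_le {n : ℕ} (M : Matrix (Fin n) (Fin n) ℝ) (y : Fin n → ℝ) :
    euclNorm (M.mulVec y) ≤ l2OpNorm M * euclNorm y := by
  have hy : ((EuclideanSpace.equiv (Fin n) ℝ).symm (M.mulVec y)) =
      LinearMap.toContinuousLinearMap (Matrix.toEuclideanLin M)
        ((EuclideanSpace.equiv (Fin n) ℝ).symm y) := rfl
  rw [euclNorm, euclNorm, l2OpNorm, hy]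
  exact (LinearMap.toContinuousLinearMap (Matrix.toEuclideanLin M)).le_opNorm _

/-- The `L`-layer noise-propagation bound (Equation (9)): iterating the ASR residual
recursion `x_{t+1} = x_t + v_t ⊙ (A_t (W_t x_t))` gives
`‖x'_L − x_L‖ ≤ ‖x'_0 − x_0‖ · ∏_{t<L} (1 + α_t ‖W_t‖₂)`. -/
theorem asr_noise_propagation (n L : ℕ) (hL : 1 ≤ L)
    (W : ℕ → Matrix (Fin n) (Fin n) ℝ)
    (a : ℕ → Fin n → ℝ) (ha : ∀ t < L, ∀ i, a t i = 0 ∨ a t i = 1)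
    (v : ℕ → Fin n → ℝ) (α : ℕ → ℝ)
    (hα : ∀ t < L, 0 ≤ α t)
    (hv : ∀ t < L, ∀ i, 0 ≤ v t i ∧ v t i ≤ α t)
    (x x' : ℕ → Fin n → ℝ)
    (hx : ∀ t < L, x (t + 1) =
      x t + had (v t) ((Matrix.diagonal (a t)).mulVec ((W t).mulVec (x t))))
    (hx' : ∀ t < L, x' (t + 1) =
      x' t + had (v t) ((Matrix.diagonal (a t)).mulVec ((W t).mulVec (x' t)))) :
    euclNorm (x' L - x L) ≤
      euclNorm (x' 0 - x 0) * ∏ t ∈ Finset.range L, (1 + α t * l2OpNorm (W t)) := by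
  -- general claim for all k ≤ L
  suffices h : ∀ k ≤ L, euclNorm (x' k - x k) ≤
      euclNorm (x' 0 - x 0) * ∏ t ∈ Finset.range k, (1 + α t * l2OpNorm (W t)) from
    h L le_rfl
  intro k hk
  induction k with
  | zero => simp
  | succ t ih =>
    have htL : t < L := hk
    have ih' := ih (le_of_lt htL)
    set d := x' t - x t with hd
    have hstep : x' (t + 1) - x (t + 1) =
        d + had (v t) ((Matrix.diagonal (a t)).mulVec ((W t).mulVec d)) := by
      rw [hx t htL, hx' t htL, hd]
      funext i
      simp [had, Matrix.mulVec_sub, Matrix.mulVec, dotProduct, Pi.sub_apply,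
        mul_sub, Finset.sum_sub_distrib]
      ring
    have key : euclNorm (x' (t+1) - x (t+1)) ≤ (1 + α t * l2OpNorm (W t)) * euclNorm d := by
      rw [hstep]
      calc euclNorm (d + had (v t) ((Matrix.diagonal (a t)).mulVec ((W t).mulVec d)))
          ≤ euclNorm d + euclNorm (had (v t) ((Matrix.diagonal (a t)).mulVec ((W t).mulVec d))) :=
            euclNorm_add_le _ _
        _ ≤ euclNorm d + α t * (l2OpNorm (W t) * euclNorm d) := by
            gcongr ?_ + ?_
            · exact le_rfl
            · -- bound hadamard term: |v_i * (A (W d))_i| ≤ α |(W d)_i|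
              have h1 : euclNorm (had (v t) ((Matrix.diagonal (a t)).mulVec ((W t).mulVec d)))
                  ≤ euclNorm (α t • ((W t).mulVec d)) := by
                apply euclNorm_mono
                intro i
                have hdiag : (Matrix.diagonal (a t)).mulVec ((W t).mulVec d) i
                    = a t i * ((W t).mulVec d) i := by
                  simp [Matrix.mulVec_diagonal]
                rw [had, hdiag]
                simp only [Pi.smul_apply, smul_eq_mul, abs_mul]
                rcases ha t htL i with h0 | h1
                · simp [h0]
                  positivity
                · rw [h1]
                  simp only [abs_one, one_mul]
                  have hvv := hv t htL i
                  have hva : |v t i| ≤ |α t| := by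
                    rw [abs_of_nonneg hvv.1, abs_of_nonneg (hα t htL)]
                    exact hvv.2
                  exact mul_le_mul_of_nonneg_right hva (abs_nonneg _)
              have h2 : euclNorm (α t • ((W t).mulVec d)) = α t * euclNorm ((W t).mulVec d) := by
                unfold euclNorm
                rw [map_smul, norm_smul, Real.norm_eq_abs, abs_of_nonneg (hα t htL)]
              rw [h2] at h1
              calc euclNorm (had (v t) ((Matrix.diagonal (a t)).mulVec ((W t).mulVec d)))
                  ≤ α t * euclNorm ((W t).mulVec d) := h1
                _ ≤ α t * (l2OpNorm (W t) * euclNorm d) := by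
                    gcongr
                    · exact hα t htL
                    · exact euclNorm_mulVec_le _ _
        _ = (1 + α t * l2OpNorm (W t)) * euclNorm d := by ring
    calc euclNorm (x' (t+1) - x (t+1)) ≤ (1 + α t * l2OpNorm (W t)) * euclNorm d := key
      _ ≤ (1 + α t * l2OpNorm (W t)) *
          (euclNorm (x' 0 - x 0) * ∏ s ∈ Finset.range t, (1 + α s * l2OpNorm (W s))) := by
          have h0 : 0 ≤ l2OpNorm (W t) := norm_nonneg _
          have h0' := hα t htL
          gcongr
          all_goals positivity
      _ = euclNorm (x' 0 - x 0) * ∏ s ∈ Finset.range (t+1), (1 + α s * l2OpNorm (W s)) := by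
          rw [Finset.prod_range_succ]; ring
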